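/- Let A be a positive sectorial operator with compact resolvent on a Banach space X, and let X₁ ⊂ D(A) be a finite-dimensional subspace. Then there exist a closed subspace X₂ ⊂ X and a bounded linear operator B' ∈ L(X, X) such that X = X₁ ⊕ X₂, (A − B')x = 0 for all x ∈ X₁, and (A − B')x ∈ X₂ for all x ∈ X₂ ∩ D(A). -/

import Mathlib

/-- Let `A` be a positive sectorial operator with compact resolvent on a
Banach space `X`, with domain `D = D(A)`, and let `X₁ ⊂ D(A)` be a finite-dimensional
subspace.  Then there exist a closed subspace `X₂ ⊂ X` and a bounded linear operator
`B' ∈ L(X,X)` such that `X = X₁ ⊕ X₂`, `(A − B')x = 0` for all `x ∈ X₁`, and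
`(A − B')x ∈ X₂` for all `x ∈ X₂ ∩ D(A)`.

The sectoriality and compactness of the resolvent are encoded through the hypothesis
`hres`: for all sufficiently large `μ > 0` the resolvent `R μ = (A + μ I)^{-1}` exists as
a compact bounded operator with `‖R μ‖ ≤ M/μ`. -/
theorem stmt6 {X : Type*} [NormedAddCommGroup X] [NormedSpace ℝ X] [CompleteSpace X]
    (D : Submodule ℝ X) (A : D →ₗ[ℝ] X)
    (hres : ∃ μ₀ M : ℝ, 0 < μ₀ ∧ 0 < M ∧ ∀ μ : ℝ, μ₀ ≤ μ →
      ∃ R : X →L[ℝ] X, IsCompactOperator R ∧ ‖R‖ ≤ M / μ ∧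
        (∀ d : D, R (A d + μ • (d : X)) = (d : X)) ∧
        (∀ y : X, ∃ d : D, (d : X) = R y ∧ A d + μ • (d : X) = y))
    (X₁ : Submodule ℝ X) (hX₁D : X₁ ≤ D) [FiniteDimensional ℝ X₁] :
    ∃ (X₂ : Submodule ℝ X) (B' : X →L[ℝ] X),
      IsClosed (X₂ : Set X) ∧ IsCompl X₁ X₂ ∧
      (∀ d : D, (d : X) ∈ X₁ → A d - B' (d : X) = 0) ∧
      (∀ d : D, (d : X) ∈ X₂ → A d - B' (d : X) ∈ X₂) := by
  obtain ⟨μ₀, M, hμ₀, hM, h⟩ := hres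
  obtain ⟨R, -, -, hR1, hR2⟩ := h μ₀ le_rfl
  -- R is injective
  have hRinj : Function.Injective R := by
    intro y z hyz
    obtain ⟨d, hd, hd2⟩ := hR2 y
    obtain ⟨e, he, he2⟩ := hR2 z
    have hde : d = e := Subtype.ext (by rw [hd, he, hyz])
    rw [← hd2, ← he2, hde]
  set RL : X₁ →ₗ[ℝ] X := R.toLinearMap ∘ₗ X₁.subtype with hRL
  have hRLinj : Function.Injective RL := by
    intro a b hab
    exact Subtype.ext (hRinj hab)
  set V : Submodule ℝ X := LinearMap.range RL with hV
  have : FiniteDimensional ℝ V := inferInstance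
  set E : X₁ ≃ₗ[ℝ] V := LinearEquiv.ofInjective RL hRLinj with hE
  obtain ⟨f, hf⟩ := Submodule.ClosedComplemented.of_finiteDimensional V
  set Q : X →L[ℝ] X₁ :=
    (LinearMap.toContinuousLinearMap E.symm.toLinearMap).comp f with hQ
  have key : ∀ e : X₁, Q (R (e : X)) = e := by
    intro e
    have hmem : R (e : X) ∈ V := ⟨e, rfl⟩
    have h1 : f (R (e : X)) = ⟨R (e : X), hmem⟩ := by
      have := hf ⟨R (e : X), hmem⟩
      simpa using this
    have h2 : E e = ⟨R (e : X), hmem⟩ := Subtype.ext (by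
      simp only [hE, LinearEquiv.ofInjective_apply]
      rfl)
    simp [hQ, h1, ← h2]
  set QR : X →L[ℝ] X₁ := Q.comp R with hQR
  set P : X →L[ℝ] X := X₁.subtypeL.comp QR with hP
  set AL : X₁ →ₗ[ℝ] X := A ∘ₗ Submodule.inclusion hX₁D with hAL
  set B' : X →L[ℝ] X :=
    (LinearMap.toContinuousLinearMap AL).comp QR + X₁.subtypeL.comp Q
      - X₁.subtypeL.comp (Q.comp P) with hB'
  have hALapp : ∀ (d : D) (hd : (d : X) ∈ X₁), AL ⟨(d : X), hd⟩ = A d := by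
    intro d hd
    have : Submodule.inclusion hX₁D ⟨(d : X), hd⟩ = d := Subtype.ext rfl
    simp [hAL, this]
  refine ⟨LinearMap.ker (QR : X →ₗ[ℝ] X₁), B', ?_, ?_, ?_, ?_⟩
  · exact ContinuousLinearMap.isClosed_ker QR
  · constructor
    · rw [Submodule.disjoint_def]
      intro x hx1 hx2
      have h1 : QR x = ⟨x, hx1⟩ := key ⟨x, hx1⟩
      have h2 : QR x = 0 := hx2
      have := h1.symm.trans h2
      exact congrArg Subtype.val this
    · rw [codisjoint_iff_le_sup]
      intro x _
      refine Submodule.mem_sup.2 ⟨P x, (QR x).2, x - P x, ?_, by abel⟩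
      have : QR (x - P x) = 0 := by
        have h1 : QR ((QR x : X)) = QR x := key (QR x)
        simp only [map_sub]
        rw [hP]
        simpa using sub_eq_zero.2 h1.symm
      exact this
  · intro d hd
    have h1 : QR (d : X) = ⟨(d : X), hd⟩ := key ⟨(d : X), hd⟩
    have h2 : P (d : X) = (d : X) := by simp [hP, h1]
    have h3 : B' (d : X) = A d := by
      simp [hB', h1, h2, hALapp d hd]
    rw [h3, sub_self]
  · intro d hd
    have hQRd : QR (d : X) = 0 := hd
    have hB'd : B' (d : X) = ((Q (d : X) : X₁) : X) := by
      simp [hB', hP, hQRd]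
    have hRAd : R (A d) = (d : X) - μ₀ • R (d : X) := by
      have h5 := hR1 d
      rw [map_add, map_smul] at h5
      exact eq_sub_of_add_eq h5
    show A d - B' (d : X) ∈ LinearMap.ker (QR : X →ₗ[ℝ] X₁)
    rw [LinearMap.mem_ker]
    have e1 : QR (A d) = Q (d : X) := by
      simp only [hQR, ContinuousLinearMap.comp_apply]
      rw [hRAd, map_sub, map_smul]
      have : Q (R (d : X)) = 0 := hQRd
      rw [this, smul_zero, sub_zero]
    have e2 : QR (B' (d : X)) = Q (d : X) := by
      rw [hB'd]; exact key (Q (d : X))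
    rw [map_sub, ContinuousLinearMap.coe_coe, e1, e2, sub_self]
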